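/- Let m ≥ 2 and let σ be a permutation of {1,…,m} that is a single m-cycle. Then σ contains some permutation τ of {1,…,m−1} with ℓ(τ) ≥ m−2. -/

import Mathlib

open Finset

/-- The (Coxeter) length of a permutation: its number of inversions,
i.e. pairs `i < j` with `σ i > σ j`. -/
def invCount {m : ℕ} (σ : Equiv.Perm (Fin m)) : ℕ :=
  (Finset.univ.filter (fun p : Fin m × Fin m => p.1 < p.2 ∧ σ p.2 < σ p.1)).card

def involCount {m : ℕ} (σ : Equiv.Perm (Fin m)) (d : Fin m) : ℕ :=
  (Finset.univ.filter (fun p : Fin m × Fin m =>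
    (p.1 < p.2 ∧ σ p.2 < σ p.1) ∧ (p.1 = d ∨ p.2 = d))).card

lemma delAux {n : ℕ} (σ : Equiv.Perm (Fin (n+1))) (d : Fin (n+1)) (a : Fin n) :
    σ (d.succAbove a) ≠ σ d := fun h => Fin.succAbove_ne d a (σ.injective h)

noncomputable def delFun {n : ℕ} (σ : Equiv.Perm (Fin (n+1))) (d : Fin (n+1)) (a : Fin n) :
    Fin n := (Fin.exists_succAbove_eq (delAux σ d a)).choose

lemma delFun_spec {n : ℕ} (σ : Equiv.Perm (Fin (n+1))) (d : Fin (n+1)) (a : Fin n) :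
    (σ d).succAbove (delFun σ d a) = σ (d.succAbove a) :=
  (Fin.exists_succAbove_eq (delAux σ d a)).choose_spec

noncomputable def delPerm {n : ℕ} (σ : Equiv.Perm (Fin (n+1))) (d : Fin (n+1)) :
    Equiv.Perm (Fin n) :=
  Equiv.ofBijective (delFun σ d) (by
    rw [← Finite.injective_iff_bijective]
    intro a b hab
    have ha := delFun_spec σ d a
    rw [hab, delFun_spec σ d b] at ha
    exact (Fin.succAbove_right_injective (σ.injective ha)).symm)

lemma delPerm_spec {n : ℕ} (σ : Equiv.Perm (Fin (n+1))) (d : Fin (n+1)) (a : Fin n) :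
    (σ d).succAbove (delPerm σ d a) = σ (d.succAbove a) := delFun_spec σ d a

lemma delPerm_lt_iff {n : ℕ} (σ : Equiv.Perm (Fin (n+1))) (d : Fin (n+1)) (a b : Fin n) :
    delPerm σ d a < delPerm σ d b ↔ σ (d.succAbove a) < σ (d.succAbove b) := by
  rw [← delPerm_spec σ d a, ← delPerm_spec σ d b, Fin.succAbove_lt_succAbove_iff]

lemma inv_split {n : ℕ} (σ : Equiv.Perm (Fin (n+1))) (d : Fin (n+1)) :
    invCount σ = involCount σ d + invCount (delPerm σ d) := by
  classical
  have key : invCount (delPerm σ d) =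
      (Finset.univ.filter (fun p : Fin (n+1) × Fin (n+1) =>
        (p.1 < p.2 ∧ σ p.2 < σ p.1) ∧ ¬(p.1 = d ∨ p.2 = d))).card := by
    apply Finset.card_bij (fun p _ => (d.succAbove p.1, d.succAbove p.2))
    · rintro ⟨a, b⟩ hab
      simp only [Finset.mem_filter, Finset.mem_univ, true_and] at hab ⊢
      refine ⟨⟨Fin.succAbove_lt_succAbove_iff.2 hab.1, ?_⟩, ?_⟩
      · rw [← delPerm_lt_iff σ d]; exact hab.2
      · push_neg
        exact ⟨Fin.succAbove_ne d a, Fin.succAbove_ne d b⟩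
    · rintro ⟨a, b⟩ _ ⟨a', b'⟩ _ h
      simp only [Prod.mk.injEq] at h
      exact Prod.ext (Fin.succAbove_right_injective h.1) (Fin.succAbove_right_injective h.2)
    · rintro ⟨x, y⟩ hxy
      simp only [Finset.mem_filter, Finset.mem_univ, true_and] at hxy
      push_neg at hxy
      obtain ⟨a, ha⟩ := Fin.exists_succAbove_eq hxy.2.1
      obtain ⟨b, hb⟩ := Fin.exists_succAbove_eq hxy.2.2
      refine ⟨(a, b), ?_, by simp [ha, hb]⟩
      simp only [Finset.mem_filter, Finset.mem_univ, true_and]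
      constructor
      · rw [← Fin.succAbove_lt_succAbove_iff (p := d), ha, hb]; exact hxy.1.1
      · rw [delPerm_lt_iff σ d, ha, hb]; exact hxy.1.2
  rw [invCount, involCount, key, ← Finset.card_filter_add_card_filter_not
      (s := Finset.univ.filter (fun p : Fin (n+1) × Fin (n+1) => p.1 < p.2 ∧ σ p.2 < σ p.1))
      (p := fun p => p.1 = d ∨ p.2 = d), Finset.filter_filter, Finset.filter_filter]

lemma sum_invol {m : ℕ} (σ : Equiv.Perm (Fin m)) :
    ∑ d : Fin m, involCount σ d = 2 * invCount σ := by
  classical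
  have h1 : ∀ d : Fin m, involCount σ d =
      ∑ p ∈ Finset.univ.filter (fun p : Fin m × Fin m => p.1 < p.2 ∧ σ p.2 < σ p.1),
        (if p.1 = d ∨ p.2 = d then 1 else 0) := by
    intro d
    rw [involCount, ← Finset.filter_filter, Finset.card_filter]
  simp only [h1]
  rw [Finset.sum_comm]
  have h2 : ∀ p ∈ Finset.univ.filter (fun p : Fin m × Fin m => p.1 < p.2 ∧ σ p.2 < σ p.1),
      (∑ d : Fin m, if p.1 = d ∨ p.2 = d then 1 else 0) = 2 := by
    rintro ⟨a, b⟩ hab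
    simp only [Finset.mem_filter, Finset.mem_univ, true_and] at hab
    have hne : a ≠ b := ne_of_lt hab.1
    have : (Finset.univ.filter (fun d : Fin m => (a, b).1 = d ∨ (a, b).2 = d)) = {a, b} := by
      ext d
      simp [eq_comm]
    rw [← Finset.card_filter, this, Finset.card_insert_of_notMem (by simp [hne]),
      Finset.card_singleton]
  rw [Finset.sum_congr rfl h2, Finset.sum_const, smul_eq_mul, mul_comm, invCount]

lemma invol_max {n : ℕ} (σ : Equiv.Perm (Fin (n+1))) (p : Fin (n+1)) (hp : σ p = Fin.last n) :
    involCount σ p = n - p.val := by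
  rw [involCount]
  have hset : (Finset.univ.filter (fun q : Fin (n+1) × Fin (n+1) =>
      (q.1 < q.2 ∧ σ q.2 < σ q.1) ∧ (q.1 = p ∨ q.2 = p))) = {p} ×ˢ Finset.Ioi p := by
    ext ⟨x, y⟩
    simp only [Finset.mem_filter, Finset.mem_univ, true_and, Finset.mem_product,
      Finset.mem_singleton, Finset.mem_Ioi]
    constructor
    · rintro ⟨⟨hxy, hσ⟩, h | h⟩
      · exact ⟨h, h ▸ hxy⟩
      · exfalso; subst h; rw [hp] at hσ; exact absurd hσ (not_lt.2 (Fin.le_last _))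
    · rintro ⟨rfl, hy⟩
      have hne : σ y ≠ Fin.last n := fun h => (ne_of_gt hy) (σ.injective (h.trans hp.symm))
      exact ⟨⟨hy, hp ▸ (Fin.le_last (σ y)).lt_of_ne hne⟩, Or.inl rfl⟩
  rw [hset, Finset.card_product, Finset.card_singleton, one_mul, Fin.card_Ioi]
  omega

def bondSet {N : ℕ} (σ : Equiv.Perm (Fin N)) : Finset ℕ :=
  (Finset.Ico 1 N).filter (fun c => ∀ i : Fin N, i.val < c → (σ i).val < c)

def bondCount {N : ℕ} (σ : Equiv.Perm (Fin N)) : ℕ := (bondSet σ).card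

lemma bond_transfer {n : ℕ} (σ : Equiv.Perm (Fin (n+1))) (p : Fin (n+1))
    (hp : σ p = Fin.last n) (c : ℕ) (hc : c ∈ bondSet (delPerm σ p)) (hcp : c ≤ p.val) :
    c ∈ bondSet σ := by
  rw [bondSet, Finset.mem_filter, Finset.mem_Ico] at hc ⊢
  obtain ⟨⟨h1, h2⟩, hbond⟩ := hc
  refine ⟨⟨h1, by omega⟩, ?_⟩
  intro i hi
  have hin : i.val < n := by omega
  set a : Fin n := ⟨i.val, hin⟩ with ha
  have hsa : p.succAbove a = i := by
    rw [Fin.succAbove_of_castSucc_lt p a (by rw [Fin.lt_def, Fin.coe_castSucc]; show i.val < p.val; omega)]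
    ext
    simp only [Fin.coe_castSucc, ha]
  have hval : ((delPerm σ p) a).val = (σ i).val := by
    have := delPerm_spec σ p a
    rw [hp, Fin.succAbove_last, hsa] at this
    exact congrArg Fin.val this
  rw [← hval]
  exact hbond a hi

lemma lemA : ∀ (N : ℕ) (σ : Equiv.Perm (Fin N)), N ≤ invCount σ + bondCount σ + 1 := by
  intro N
  induction N with
  | zero => intro σ; omega
  | succ n IH =>
    intro σ
    rcases Nat.eq_zero_or_pos n with hn | hn
    · subst hn; omega
    set p : Fin (n+1) := σ⁻¹ (Fin.last n) with hpdef
    have hp : σ p = Fin.last n := Equiv.apply_symm_apply σ _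
    set τ := delPerm σ p with hτ
    have hIH := IH τ
    have hinv : invCount σ = (n - p.val) + invCount τ := by
      rw [inv_split σ p, invol_max σ p hp]
    rcases Nat.lt_or_ge p.val n with hplt | hpge
    -- case p.val < n
    · have hsub : bondSet τ ⊆ bondSet σ ∪ Finset.Ioo p.val n := by
        intro c hc
        rcases le_or_gt c p.val with h | h
        · exact Finset.mem_union_left _ (bond_transfer σ p hp c hc h)
        · apply Finset.mem_union_right
          rw [bondSet, Finset.mem_filter, Finset.mem_Ico] at hc
          rw [Finset.mem_Ioo]
          exact ⟨h, hc.1.2⟩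
      have hcard : bondCount τ ≤ bondCount σ + (n - p.val - 1) := by
        calc bondCount τ ≤ (bondSet σ ∪ Finset.Ioo p.val n).card :=
              Finset.card_le_card hsub
          _ ≤ bondCount σ + (Finset.Ioo p.val n).card := Finset.card_union_le _ _
          _ = bondCount σ + (n - p.val - 1) := by rw [Nat.card_Ioo]
      omega
    -- case p.val = n
    · have hpn : p.val = n := le_antisymm (Nat.lt_succ_iff.mp p.isLt) hpge
      have hnb : n ∈ bondSet σ := by
        rw [bondSet, Finset.mem_filter, Finset.mem_Ico]
        refine ⟨⟨hn, Nat.lt_succ_self n⟩, ?_⟩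
        intro i hi
        have hip : i ≠ p := fun h => by rw [h, hpn] at hi; omega
        have : σ i ≠ Fin.last n := fun h => hip (σ.injective (h.trans hp.symm))
        have := Fin.val_lt_last this
        simpa using this
      have hsub : insert n (bondSet τ) ⊆ bondSet σ := by
        intro c hc
        rcases Finset.mem_insert.mp hc with rfl | hc
        · exact hnb
        · apply bond_transfer σ p hp c hc
          rw [bondSet, Finset.mem_filter, Finset.mem_Ico] at hc
          omega
      have hnotmem : n ∉ bondSet τ := by
        rw [bondSet, Finset.mem_filter, Finset.mem_Ico]
        rintro ⟨⟨-, h⟩, -⟩; omega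
      have hcard : bondCount τ + 1 ≤ bondCount σ := by
        rw [bondCount, ← Finset.card_insert_of_notMem hnotmem]
        exact Finset.card_le_card hsub
      omega

lemma bondCount_eq_zero {m : ℕ} (σ : Equiv.Perm (Fin m))
    (hcyc : σ.IsCycle) (hsupp : σ.support = Finset.univ) : bondCount σ = 0 := by
  classical
  rw [bondCount, Finset.card_eq_zero, bondSet, Finset.filter_eq_empty_iff]
  intro c hcmem hbond
  rw [Finset.mem_Ico] at hcmem
  have hmoved : ∀ x : Fin m, σ x ≠ x :=
    fun x => Equiv.Perm.mem_support.mp (by rw [hsupp]; exact Finset.mem_univ x)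
  set S : Finset (Fin m) := Finset.univ.filter (fun x => x.val < c) with hS
  have hmapsto : ∀ x ∈ S, σ x ∈ S := by
    intro x hx
    rw [hS, Finset.mem_filter] at hx ⊢
    exact ⟨Finset.mem_univ _, hbond x hx.2⟩
  have himage : S.image σ = S := by
    apply Finset.eq_of_subset_of_card_le
    · intro y hy
      obtain ⟨x, hx, rfl⟩ := Finset.mem_image.mp hy
      exact hmapsto x hx
    · rw [Finset.card_image_of_injective _ σ.injective]
  have hiff : ∀ x : Fin m, σ x ∈ S ↔ x ∈ S := by
    intro x
    constructor
    · intro hx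
      rw [← himage] at hx
      obtain ⟨y, hy, hyx⟩ := Finset.mem_image.mp hx
      rwa [← σ.injective hyx]
    · exact hmapsto x
  have hinvar : ∀ k : ℤ, (σ ^ k) (⟨0, by omega⟩ : Fin m) ∈ S := by
    have h0 : (⟨0, by omega⟩ : Fin m) ∈ S := by
      rw [hS, Finset.mem_filter]; exact ⟨Finset.mem_univ _, by simp; omega⟩
    intro k
    induction k using Int.induction_on with
    | zero => simpa using h0
    | succ k ih =>
      have hstep : (σ ^ ((k : ℤ) + 1)) (⟨0, by omega⟩ : Fin m)
          = σ ((σ ^ (k : ℤ)) ⟨0, by omega⟩) := by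
        rw [add_comm, zpow_add, zpow_one, Equiv.Perm.mul_apply]
      rw [hstep]
      exact (hiff _).mpr ih
    | pred k ih =>
      have hstep : (σ ^ (-(k : ℤ) - 1)) (⟨0, by omega⟩ : Fin m)
          = σ⁻¹ ((σ ^ (-(k : ℤ))) ⟨0, by omega⟩) := by
        rw [sub_eq_add_neg, add_comm, zpow_add, zpow_neg_one, Equiv.Perm.mul_apply]
      rw [hstep]
      have := hiff (σ⁻¹ ((σ ^ (-(k:ℤ))) ⟨0, by omega⟩))
      rw [show σ (σ⁻¹ ((σ ^ (-(k:ℤ))) ⟨0, by omega⟩)) = (σ ^ (-(k:ℤ))) ⟨0, by omega⟩ from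
        Equiv.apply_symm_apply σ _] at this
      exact this.mp ih
  have hb : (⟨c, hcmem.2⟩ : Fin m) ∉ S := by
    rw [hS, Finset.mem_filter]; simp
  obtain ⟨i, hi⟩ := hcyc.exists_zpow_eq (hmoved ⟨0, by omega⟩) (hmoved ⟨c, hcmem.2⟩)
  exact hb (hi ▸ hinvar i)

lemma exists_small_invol {m : ℕ} (hm : 1 ≤ m) (σ : Equiv.Perm (Fin m)) :
    ∃ d : Fin m, m * involCount σ d ≤ 2 * invCount σ := by
  by_contra h
  push_neg at h
  have hsum : ∑ _d : Fin m, (2 * invCount σ + 1) ≤ ∑ d : Fin m, m * involCount σ d :=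
    Finset.sum_le_sum (fun d _ => h d)
  rw [← Finset.mul_sum, sum_invol, Finset.sum_const, Finset.card_univ, Fintype.card_fin,
    smul_eq_mul] at hsum
  set K := m * (2 * invCount σ) with hK
  rw [Nat.mul_add, Nat.mul_one, ← hK] at hsum
  omega

/-- `σ` pattern-contains `π`: there are indices `i_1 < ⋯ < i_k` such that
`σ (i_a) < σ (i_b)` iff `π a < π b`. -/
def PatternContains {n k : ℕ} (σ : Equiv.Perm (Fin n)) (π : Equiv.Perm (Fin k)) : Prop :=
  ∃ f : Fin k ↪o Fin n, ∀ a b : Fin k, σ (f a) < σ (f b) ↔ π a < π b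

/-- Lemma 3.4: every `m`-cycle in `S_m` contains some `τ ∈ S_{m-1}` with
`ℓ(τ) ≥ m - 2`. -/
theorem m_cycle_contains_long_pattern {m : ℕ} (hm : 2 ≤ m) (σ : Equiv.Perm (Fin m))
    (hcyc : σ.IsCycle) (hsupp : σ.support = Finset.univ) :
    ∃ τ : Equiv.Perm (Fin (m - 1)), PatternContains σ τ ∧ m - 2 ≤ invCount τ := by
  obtain ⟨n, rfl⟩ : ∃ n, m = n + 1 := ⟨m - 1, by omega⟩
  have hb : bondCount σ = 0 := bondCount_eq_zero σ hcyc hsupp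
  have hlb : n ≤ invCount σ := by have := lemA (n+1) σ; omega
  obtain ⟨d, hd⟩ := exists_small_invol (by omega) σ
  have hsplit : invCount σ = involCount σ d + invCount (delPerm σ d) := inv_split σ d
  refine ⟨delPerm σ d, ⟨d.succAboveOrderEmb, ?_⟩, ?_⟩
  · intro a b
    simpa [Fin.succAboveOrderEmb_apply] using (delPerm_lt_iff σ d a b).symm
  · show n + 1 - 2 ≤ invCount (delPerm σ d)
    by_contra hcon
    push_neg at hcon
    have hT2 : 2 ≤ involCount σ d := by omega
    have hexp : (n - 1) * involCount σ d + 2 * involCount σ d = (n + 1) * involCount σ d := by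
      rw [← Nat.add_mul]
      congr 1
      omega
    have h1 : (n - 1) * 2 ≤ (n - 1) * involCount σ d := Nat.mul_le_mul_left _ hT2
    omega
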